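/- Let λ, μ ≥ 0 with λ + μ = 1, and let z ∈ ℝ. For any (p, r, q) ∈ ℤ² × ℕ with q ≥ 1, there exists (a, b, c) ∈ ℤ³ with (a, b) ≠ (0, 0) such that ap + br + cq = 0, |a| ≤ q^λ, and |b + za| ≤ q^μ. -/

import Mathlib

theorem stmt_0 (lam mu z : ℝ) (hlam : 0 ≤ lam) (hmu : 0 ≤ mu) (hsum : lam + mu = 1)
    (p r : ℤ) (q : ℕ) (hq : 1 ≤ q) :
    ∃ a b c : ℤ, (a, b) ≠ (0, 0) ∧ a * p + b * r + c * q = 0 ∧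
      |(a : ℝ)| ≤ (q : ℝ) ^ lam ∧ |(b : ℝ) + z * a| ≤ (q : ℝ) ^ mu := by
  have hq0 : (0:ℝ) < q := by exact_mod_cast hq
  set X : ℝ := (q:ℝ) ^ lam with hX
  set Y : ℝ := (q:ℝ) ^ mu with hY
  have hXpos : 0 < X := Real.rpow_pos_of_pos hq0 lam
  have hYpos : 0 < Y := Real.rpow_pos_of_pos hq0 mu
  have hXY : X * Y = q := by
    rw [hX, hY, ← Real.rpow_add hq0, hsum, Real.rpow_one]
  -- gcd setup
  set g : ℤ := (Int.gcd r q : ℤ) with hg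
  have hgpos : 0 < g := by
    have : q ≠ 0 := by omega
    have h2 : (0:ℕ) < Int.gcd r q := Int.gcd_pos_iff.mpr (Or.inr (by exact_mod_cast this))
    rw [hg]; exact_mod_cast h2
  set d : ℤ := (Int.gcd p g : ℤ) with hd
  have hdpos : 0 < d := by
    have h2 : (0:ℕ) < Int.gcd p g := Int.gcd_pos_iff.mpr (Or.inr hgpos.ne')
    rw [hd]; exact_mod_cast h2
  obtain ⟨r₀, hr₀⟩ : g ∣ r := Int.gcd_dvd_left _ _
  obtain ⟨q₀, hq₀⟩ : g ∣ (q:ℤ) := Int.gcd_dvd_right _ _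
  obtain ⟨p₀, hp₀⟩ : d ∣ p := Int.gcd_dvd_left _ _
  obtain ⟨g₁, hg₁⟩ : d ∣ g := Int.gcd_dvd_right _ _
  have hq₀pos : 0 < q₀ := by
    have hqz : (0:ℤ) < (q:ℤ) := by exact_mod_cast hq
    nlinarith
  have hg₁pos : 0 < g₁ := by nlinarith
  -- Bezout
  set u : ℤ := Int.gcdA r q with hu
  set v : ℤ := Int.gcdB r q with hv
  have hbez : g = r * u + (q:ℤ) * v := Int.gcd_eq_gcd_ab r q
  set b1 : ℤ := -p₀ * u with hb1
  set t : ℤ := p₀ * v with ht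
  have hkey : g₁ * p + b1 * r = (q:ℤ) * t := by
    rw [hb1, ht]
    linear_combination g₁ * hp₀ - p₀ * hg₁ + p₀ * hbez
  -- covolume bound : g₁ * q₀ ≤ q  (since d * g₁ * q₀ = q and d ≥ 1)
  have hcov : (g₁:ℝ) * q₀ ≤ (q:ℝ) := by
    have h1 : g₁ * q₀ ≤ (q:ℤ) := by nlinarith [hq₀, hg₁]
    exact_mod_cast h1
  -- real positivity casts
  have hg₁R : (0:ℝ) < (g₁:ℝ) := by exact_mod_cast hg₁pos
  have hq₀R : (0:ℝ) < (q₀:ℝ) := by exact_mod_cast hq₀pos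
  by_cases hcase : (g₁:ℝ) ≤ X
  · -- Dirichlet case
    set K : ℕ := ⌊X / (g₁:ℝ)⌋₊ with hK
    have hKpos : 0 < K := by
      rw [hK]
      have : (1:ℝ) ≤ X / g₁ := (one_le_div hg₁R).mpr hcase
      exact Nat.le_floor (by exact_mod_cast this)
    obtain ⟨j, k, hk0, hkK, hjk⟩ :=
      Real.exists_int_int_abs_mul_sub_le (((b1:ℝ) + z * g₁) / q₀) hKpos
    refine ⟨k * g₁, k * b1 - j * q₀, -(k * t - j * r₀), ?_, ?_, ?_, ?_⟩
    · have hapos : 0 < k * g₁ := mul_pos hk0 hg₁pos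
      intro h
      exact absurd ((Prod.mk.injEq _ _ _ _).mp h).1 hapos.ne'
    · linear_combination k * hkey + (-j * q₀) * hr₀ + (j * r₀) * hq₀
    · have hkR : (k:ℝ) ≤ K := by exact_mod_cast hkK
      have hfl : (K:ℝ) ≤ X / g₁ := Nat.floor_le (by positivity)
      have h1 : (K:ℝ) * g₁ ≤ X := by
        rw [← le_div_iff₀ hg₁R] at *; exact hfl
      have hk0R : (0:ℝ) < (k:ℝ) := by exact_mod_cast hk0
      have habs : |((k * g₁ : ℤ) : ℝ)| = (k:ℝ) * g₁ := by
        push_cast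
        exact abs_of_pos (by positivity)
      rw [habs]
      nlinarith
    · have hval : ((k * b1 - j * q₀ : ℤ) : ℝ) + z * ((k * g₁ : ℤ) : ℝ)
          = (q₀:ℝ) * ((k:ℝ) * (((b1:ℝ) + z * g₁) / q₀) - j) := by
        field_simp
        push_cast
        ring
      rw [hval, abs_mul, abs_of_pos hq₀R]
      have h2 : (q₀:ℝ) * |(k:ℝ) * (((b1:ℝ) + z * g₁) / q₀) - j| ≤ (q₀:ℝ) * (1 / (K + 1)) := by
        exact mul_le_mul_of_nonneg_left hjk hq₀R.le
      refine h2.trans ?_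
      -- q₀ / (K+1) ≤ Y
      have hfl2 : X / g₁ < (K:ℝ) + 1 := Nat.lt_floor_add_one _
      have hK1pos : (0:ℝ) < (K:ℝ) + 1 := by positivity
      rw [mul_one_div, div_le_iff₀ hK1pos]
      -- q₀ ≤ Y * (K+1):  Y*(K+1)*g₁ > Y*X = q ≥ g₁*q₀
      have h3 : X < ((K:ℝ) + 1) * g₁ := by
        rw [div_lt_iff₀ hg₁R] at hfl2; exact hfl2
      nlinarith [mul_lt_mul_of_pos_left h3 hYpos]
  · -- vertical vector case : (0, q₀)
    push_neg at hcase
    refine ⟨0, q₀, -r₀, ?_, ?_, ?_, ?_⟩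
    · intro h
      have := ((Prod.mk.injEq _ _ _ _).mp h).2
      omega
    · linear_combination q₀ * hr₀ - r₀ * hq₀
    · simpa using hXpos.le
    · have : |(q₀:ℝ) + z * ((0:ℤ):ℝ)| = (q₀:ℝ) := by
        simp [abs_of_pos hq₀R]
      push_cast
      rw [mul_zero, add_zero, abs_of_pos hq₀R]
      nlinarith
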